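/- Let n, m ≥ 1 and let C be a class of functions [n] → [m]. Call a set σ ⊆ [n] × [m] a face of C if σ is contained in the graph of some member of C, and a nonface otherwise. Then σ is a minimal nonface of C (i.e., σ is a nonface and every proper subset of σ is a face) if and only if either (i) σ = {(u,i),(u,j)} for some u ∈ [n] and distinct i, j ∈ [m] such that some member of C takes the value i at u and some member of C takes the value j at u, or (ii) σ is the graph of an extenture of C. (Equivalently, the Stanley–Reisner ideal of C is minimally generated by the functional monomials x_{u,i}x_{u,j} with both values attained in C together with the monomials x^{graph 𝕡f} for extentures 𝕡f of C.) -/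
import Mathlib


/-- A total function `f : Fin n → Fin m` extends the partial function `pf`
(represented as `Fin n → Option (Fin m)`). -/
def ExtendsPF {n m : ℕ} (f : Fin n → Fin m) (pf : Fin n → Option (Fin m)) : Prop :=
  ∀ u i, pf u = some i → f u = i

/-- `pf` is an extenture of `C`: no member of `C` extends `pf`, but every proper
restriction of `pf` has an extension in `C`. -/
def IsExtenture {n m : ℕ} (C : Set (Fin n → Fin m)) (pf : Fin n → Option (Fin m)) : Prop :=
  (¬ ∃ f ∈ C, ExtendsPF f pf) ∧
  ∀ pg : Fin n → Option (Fin m),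
    (∀ u i, pg u = some i → pf u = some i) → pg ≠ pf → ∃ f ∈ C, ExtendsPF f pg

/-- The graph of a partial function. -/
def graphPF {n m : ℕ} (pf : Fin n → Option (Fin m)) : Set (Fin n × Fin m) :=
  {p | pf p.1 = some p.2}

/-- `σ` is a face of `C` if it is contained in the graph of some member of `C`. -/
def IsFace {n m : ℕ} (C : Set (Fin n → Fin m)) (σ : Set (Fin n × Fin m)) : Prop :=
  ∃ f ∈ C, ∀ p ∈ σ, f p.1 = p.2

open Classical in
/-- The partial function induced by a (single-valued) set. -/
noncomputable def pfOf {n m : ℕ} (σ : Set (Fin n × Fin m)) : Fin n → Option (Fin m) :=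
  fun u => if h : ∃ i, (u, i) ∈ σ then some h.choose else none

lemma pfOf_mem {n m : ℕ} {σ : Set (Fin n × Fin m)} {u : Fin n} {i : Fin m}
    (h : pfOf σ u = some i) : (u, i) ∈ σ := by
  unfold pfOf at h
  split_ifs at h with hh
  cases h
  exact hh.choose_spec

lemma mem_pfOf {n m : ℕ} {σ : Set (Fin n × Fin m)}
    (hsv : ∀ u i j, (u, i) ∈ σ → (u, j) ∈ σ → i = j)
    {u : Fin n} {i : Fin m} (h : (u, i) ∈ σ) : pfOf σ u = some i := by
  unfold pfOf
  have hh : ∃ j, (u, j) ∈ σ := ⟨i, h⟩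
  rw [dif_pos hh]
  exact congrArg some (hsv u _ i hh.choose_spec h)

lemma graphPF_pfOf {n m : ℕ} {σ : Set (Fin n × Fin m)}
    (hsv : ∀ u i j, (u, i) ∈ σ → (u, j) ∈ σ → i = j) : graphPF (pfOf σ) = σ := by
  ext ⟨u, i⟩
  exact ⟨fun h => pfOf_mem h, fun h => mem_pfOf hsv h⟩

/-- A subset `σ ⊆ [n] × [m]` is a minimal nonface of a class `C` iff it is either a
functional pair `{(u,i),(u,j)}` with both values attained in `C`, or the graph of an
extenture of `C`. -/
theorem minimal_nonface_characterization {n m : ℕ} (hn : 1 ≤ n) (hm : 1 ≤ m)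
    (C : Set (Fin n → Fin m)) (σ : Set (Fin n × Fin m)) :
    (¬ IsFace C σ ∧ ∀ τ : Set (Fin n × Fin m), τ ⊂ σ → IsFace C τ) ↔
      ((∃ u : Fin n, ∃ i j : Fin m, i ≠ j ∧ σ = {(u, i), (u, j)} ∧
          (∃ f ∈ C, f u = i) ∧ (∃ g ∈ C, g u = j)) ∨
        (∃ pf : Fin n → Option (Fin m), IsExtenture C pf ∧ σ = graphPF pf)) := by
  constructor
  · rintro ⟨hnf, hmin⟩
    by_cases hsv : ∀ u i j, (u, i) ∈ σ → (u, j) ∈ σ → i = j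
    · -- extenture case
      right
      refine ⟨pfOf σ, ⟨?_, ?_⟩, (graphPF_pfOf hsv).symm⟩
      · rintro ⟨f, hf, hext⟩
        exact hnf ⟨f, hf, fun p hp => hext p.1 p.2 (mem_pfOf hsv hp)⟩
      · intro pg hle hne
        have hsub : graphPF pg ⊂ σ := by
          constructor
          · intro ⟨u, i⟩ hp
            exact pfOf_mem (hle u i hp)
          · intro hsup
            apply hne
            funext u
            cases hpg : pg u with
            | some i => exact (hle u i hpg).symm
            | none =>
              cases hpf : pfOf σ u with
              | none => rfl
              | some i =>
                have : (u, i) ∈ graphPF pg := hsup (pfOf_mem hpf)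
                rw [graphPF, Set.mem_setOf_eq] at this
                rw [hpg] at this; cases this
        obtain ⟨f, hf, hface⟩ := hmin _ hsub
        exact ⟨f, hf, fun u i hu => hface (u, i) hu⟩
    · left
      push_neg at hsv
      obtain ⟨u, i, j, hi, hj, hij⟩ := hsv
      have hpair : σ = {(u, i), (u, j)} := by
        ext p
        constructor
        · intro hp
          by_contra hpn
          have hsub : ({(u, i), (u, j)} : Set (Fin n × Fin m)) ⊂ σ := by
            constructor
            · rintro q (rfl | rfl)
              · exact hi
              · exact hj
            · intro hsup
              exact hpn (hsup hp)
          obtain ⟨f, hf, hface⟩ := hmin _ hsub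
          have h1 : f u = i := hface (u, i) (Or.inl rfl)
          have h2 : f u = j := hface (u, j) (Or.inr rfl)
          exact hij (h1 ▸ h2)
        · rintro (rfl | rfl)
          · exact hi
          · exact hj
      refine ⟨u, i, j, hij, hpair, ?_, ?_⟩
      · have hsub : ({(u, i)} : Set (Fin n × Fin m)) ⊂ σ := by
          constructor
          · rintro q rfl; exact hi
          · intro hsup
            have := hsup hj
            rw [Set.mem_singleton_iff] at this
            exact hij (congrArg Prod.snd this).symm
        obtain ⟨f, hf, hface⟩ := hmin _ hsub
        exact ⟨f, hf, hface (u, i) rfl⟩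
      · have hsub : ({(u, j)} : Set (Fin n × Fin m)) ⊂ σ := by
          constructor
          · rintro q rfl; exact hj
          · intro hsup
            have := hsup hi
            rw [Set.mem_singleton_iff] at this
            exact hij (congrArg Prod.snd this)
        obtain ⟨g, hg, hface⟩ := hmin _ hsub
        exact ⟨g, hg, hface (u, j) rfl⟩
  · rintro (⟨u, i, j, hij, rfl, ⟨f, hf, hfi⟩, ⟨g, hg, hgj⟩⟩ | ⟨pf, ⟨hne, hres⟩, rfl⟩)
    · constructor
      · rintro ⟨h, hh, hface⟩
        have h1 : h u = i := hface (u, i) (Or.inl rfl)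
        have h2 : h u = j := hface (u, j) (Or.inr rfl)
        exact hij (h1 ▸ h2)
      · intro τ hτ
        by_cases hmem : (u, i) ∈ τ
        · refine ⟨f, hf, fun p hp => ?_⟩
          have hpmem := hτ.1 hp
          rcases hpmem with rfl | rfl
          · exact hfi
          · exfalso
            apply hτ.2
            rintro q (rfl | rfl)
            · exact hmem
            · exact hp
        · refine ⟨g, hg, fun p hp => ?_⟩
          have hpmem := hτ.1 hp
          rcases hpmem with rfl | rfl
          · exact absurd hp hmem
          · exact hgj
    · constructor
      · rintro ⟨h, hh, hface⟩
        exact hne ⟨h, hh, fun v k hk => hface (v, k) hk⟩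
      · intro τ hτ
        have hsv : ∀ v k l, (v, k) ∈ τ → (v, l) ∈ τ → k = l := by
          intro v k l hk hl
          have h1 := hτ.1 hk
          have h2 := hτ.1 hl
          rw [graphPF, Set.mem_setOf_eq] at h1 h2
          exact Option.some_injective _ (h1.symm.trans h2)
        have hle : ∀ v k, pfOf τ v = some k → pf v = some k := by
          intro v k hk
          exact hτ.1 (pfOf_mem hk)
        have hneq : pfOf τ ≠ pf := by
          intro heq
          apply hτ.2
          intro ⟨v, k⟩ hk
          rw [graphPF, Set.mem_setOf_eq] at hk
          exact pfOf_mem (heq ▸ hk)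
        obtain ⟨f, hf, hext⟩ := hres (pfOf τ) hle hneq
        exact ⟨f, hf, fun p hp => hext p.1 p.2 (mem_pfOf hsv hp)⟩
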